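/- Let Ψ(ξ) = 2εK₁ e^{−α|ξ|} with ε, K₁, α > 0 and 4εK₁ < α. Define the iterated convolutions Ψ^{∗1} = Ψ and Ψ^{∗j} = Ψ ∗ Ψ^{∗(j−1)}. Then the series ∑_{j=1}^{∞} Ψ^{∗j}(ξ) converges and is bounded by K₂ e^{−ν|ξ|} for some constants K₂ > 0 and ν > 0 (one may take ν = √(α² − 4εK₁α)). -/

import Mathlib

open MeasureTheory Real

namespace IterConvAux

open Set

lemma exp_mul_Ioi {c : ℝ} (hc : 0 < c) (a : ℝ) :
    ∫ x in Ioi a, Real.exp (-(c * x)) = Real.exp (-(c * a)) / c := by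
  have h := integral_comp_mul_left_Ioi (fun y => Real.exp (-y)) a hc
  simp only [smul_eq_mul] at h
  rw [h, integral_exp_neg_Ioi]
  ring

lemma exp_mul_Iic {c : ℝ} (hc : 0 < c) (a : ℝ) :
    ∫ x in Iic a, Real.exp (c * x) = Real.exp (c * a) / c := by
  have h := integral_comp_neg_Iic a (fun y => Real.exp (-(c * y)))
  simp only [mul_neg, neg_neg] at h
  rw [h, exp_mul_Ioi hc]
  ring_nf

lemma exp_mul_ival {c : ℝ} (hc : c ≠ 0) (a b : ℝ) :
    ∫ x in a..b, Real.exp (c * x) = (Real.exp (c * b) - Real.exp (c * a)) / c := by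
  have h := intervalIntegral.integral_comp_mul_left (a := a) (b := b) (f := Real.exp) hc
  rw [h, _root_.integral_exp, smul_eq_mul]
  ring

lemma integrable_exp_abs {c : ℝ} (hc : 0 < c) :
    Integrable (fun x : ℝ => Real.exp (-(c * |x|))) := by
  have hIoi : IntegrableOn (fun x : ℝ => Real.exp (-(c * |x|))) (Ioi 0) := by
    refine ((exp_neg_integrableOn_Ioi 0 hc).congr_fun (fun x hx => ?_) measurableSet_Ioi)
    rw [abs_of_pos hx]; simp only [neg_mul]
  have hIic : IntegrableOn (fun x : ℝ => Real.exp (-(c * |x|))) (Iic 0) := by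
    rw [← Measure.map_neg_eq_self (volume : Measure ℝ)]
    have m : MeasurableEmbedding fun x : ℝ => -x :=
      (Homeomorph.neg ℝ).measurableEmbedding
    rw [m.integrableOn_map_iff]
    simp only [Function.comp_def, abs_neg, neg_preimage, neg_Iic, neg_zero]
    exact Iff.mpr integrableOn_Ici_iff_integrableOn_Ioi hIoi
  have := hIic.union hIoi
  rwa [Iic_union_Ioi, integrableOn_univ] at this

lemma integrable_kernel {a v : ℝ} (ha : 0 < a) (hv : 0 < v) (ξ : ℝ) :
    Integrable (fun η : ℝ => Real.exp (-a * |ξ - η|) * Real.exp (-v * |η|)) := by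
  refine (integrable_exp_abs hv).mono' ?_ ?_
  · exact (Continuous.mul (by fun_prop) (by fun_prop)).aestronglyMeasurable
  · refine Filter.Eventually.of_forall (fun η => ?_)
    rw [Real.norm_eq_abs, abs_of_nonneg (by positivity)]
    have h1 : Real.exp (-a * |ξ - η|) ≤ 1 :=
      Real.exp_le_one_iff.mpr (by nlinarith [abs_nonneg (ξ - η)])
    calc Real.exp (-a * |ξ - η|) * Real.exp (-v * |η|)
        ≤ 1 * Real.exp (-v * |η|) :=
          mul_le_mul_of_nonneg_right h1 (Real.exp_pos _).le
      _ = Real.exp (-(v * |η|)) := by rw [one_mul, neg_mul]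

lemma conv_exp_nonneg {a v : ℝ} (hv : 0 < v) (hva : v < a) {ξ : ℝ} (hξ : 0 ≤ ξ) :
    ∫ η : ℝ, Real.exp (-a * |ξ - η|) * Real.exp (-v * |η|)
      = (2 * a * Real.exp (-v * ξ) - 2 * v * Real.exp (-a * ξ)) / (a ^ 2 - v ^ 2) := by
  have ha : 0 < a := hv.trans hva
  have hint := integrable_kernel ha hv ξ
  have hav : (0:ℝ) < a + v := by linarith
  have hav' : (0:ℝ) < a - v := by linarith
  have hsplit : (∫ η : ℝ, Real.exp (-a * |ξ - η|) * Real.exp (-v * |η|))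
      = (∫ η in Iic (0:ℝ), Real.exp (-a * |ξ - η|) * Real.exp (-v * |η|))
      + ((∫ η in Ioc (0:ℝ) ξ, Real.exp (-a * |ξ - η|) * Real.exp (-v * |η|))
        + (∫ η in Ioi ξ, Real.exp (-a * |ξ - η|) * Real.exp (-v * |η|))) := by
    rw [← intervalIntegral.integral_Iic_add_Ioi hint.integrableOn hint.integrableOn]
    congr 1
    rw [← Ioc_union_Ioi_eq_Ioi hξ,
      setIntegral_union (Ioc_disjoint_Ioi le_rfl) measurableSet_Ioi
        hint.integrableOn hint.integrableOn]
  have hA : (∫ η in Iic (0:ℝ), Real.exp (-a * |ξ - η|) * Real.exp (-v * |η|))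
      = Real.exp (-a * ξ) / (a + v) := by
    rw [setIntegral_congr_fun measurableSet_Iic
      (g := fun η => Real.exp (-a * ξ) * Real.exp ((a + v) * η))
      (fun η hη => ?_), MeasureTheory.integral_const_mul, exp_mul_Iic hav, mul_zero,
      Real.exp_zero]
    · ring
    · have hη' : η ≤ 0 := hη
      show Real.exp (-a * |ξ - η|) * Real.exp (-v * |η|)
          = Real.exp (-a * ξ) * Real.exp ((a + v) * η)
      rw [abs_of_nonneg (by linarith), abs_of_nonpos hη', ← Real.exp_add, ← Real.exp_add]
      congr 1; ring
  have hB : (∫ η in Ioc (0:ℝ) ξ, Real.exp (-a * |ξ - η|) * Real.exp (-v * |η|))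
      = (Real.exp (-v * ξ) - Real.exp (-a * ξ)) / (a - v) := by
    rw [setIntegral_congr_fun measurableSet_Ioc
      (g := fun η => Real.exp (-a * ξ) * Real.exp ((a - v) * η))
      (fun η hη => ?_), ← intervalIntegral.integral_of_le hξ,
      intervalIntegral.integral_const_mul, exp_mul_ival hav'.ne', mul_zero, Real.exp_zero]
    · have key : Real.exp (-a * ξ) * Real.exp ((a - v) * ξ) = Real.exp (-v * ξ) := by
        rw [← Real.exp_add]; congr 1; ring
      rw [mul_div_assoc', mul_sub, key, mul_one]
    · obtain ⟨hη1, hη2⟩ := hη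
      show Real.exp (-a * |ξ - η|) * Real.exp (-v * |η|)
          = Real.exp (-a * ξ) * Real.exp ((a - v) * η)
      rw [abs_of_nonneg (by linarith), abs_of_pos hη1, ← Real.exp_add, ← Real.exp_add]
      congr 1; ring
  have hC : (∫ η in Ioi ξ, Real.exp (-a * |ξ - η|) * Real.exp (-v * |η|))
      = Real.exp (-v * ξ) / (a + v) := by
    rw [setIntegral_congr_fun measurableSet_Ioi
      (g := fun η => Real.exp (a * ξ) * Real.exp (-((a + v) * η)))
      (fun η hη => ?_), MeasureTheory.integral_const_mul, exp_mul_Ioi hav]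
    · rw [mul_div_assoc', ← Real.exp_add]
      congr 2; ring
    · have hη' : ξ < η := hη
      show Real.exp (-a * |ξ - η|) * Real.exp (-v * |η|)
          = Real.exp (a * ξ) * Real.exp (-((a + v) * η))
      rw [abs_of_nonpos (by linarith), abs_of_pos (by linarith), ← Real.exp_add, ← Real.exp_add]
      congr 1; ring
  have hne1 : a + v ≠ 0 := hav.ne'
  have hne2 : a - v ≠ 0 := hav'.ne'
  have hne3 : a ^ 2 - v ^ 2 ≠ 0 := by nlinarith
  rw [hsplit, hA, hB, hC]
  field_simp
  ring

lemma conv_exp {a v : ℝ} (hv : 0 < v) (hva : v < a) (ξ : ℝ) :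
    ∫ η : ℝ, Real.exp (-a * |ξ - η|) * Real.exp (-v * |η|)
      = (2 * a * Real.exp (-v * |ξ|) - 2 * v * Real.exp (-a * |ξ|)) / (a ^ 2 - v ^ 2) := by
  rcases le_total 0 ξ with hξ | hξ
  · rw [abs_of_nonneg hξ]; exact conv_exp_nonneg hv hva hξ
  · have h := conv_exp_nonneg hv hva (ξ := -ξ) (by linarith)
    rw [abs_of_nonpos hξ, ← h]
    have heq : ∀ η : ℝ, Real.exp (-a * |(-ξ) - (-η)|) * Real.exp (-v * |(-η)|)
        = Real.exp (-a * |ξ - η|) * Real.exp (-v * |η|) := by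
      intro η
      rw [abs_neg, show (-ξ) - (-η) = -(ξ - η) by ring, abs_neg]
    calc ∫ η : ℝ, Real.exp (-a * |ξ - η|) * Real.exp (-v * |η|)
        = ∫ η : ℝ, Real.exp (-a * |(-ξ) - (-η)|) * Real.exp (-v * |(-η)|) := by
          simp_rw [heq]
      _ = ∫ η : ℝ, Real.exp (-a * |(-ξ) - η|) * Real.exp (-v * |η|) :=
          integral_neg_eq_self
            (fun η => Real.exp (-a * |(-ξ) - η|) * Real.exp (-v * |η|)) volume

end IterConvAux

open IterConvAux

theorem iterated_convolution_sum_bound (ε K₁ α : ℝ) (hε : 0 < ε) (hK : 0 < K₁) (hα : 0 < α)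
    (hsmall : 4 * ε * K₁ < α)
    (Psi : ℕ → ℝ → ℝ)
    (h1 : Psi 1 = fun ξ => 2 * ε * K₁ * Real.exp (-α * |ξ|))
    (hrec : ∀ j : ℕ, 2 ≤ j → Psi j = fun ξ => ∫ η : ℝ, Psi 1 (ξ - η) * Psi (j - 1) η) :
    ∃ K₂ : ℝ, 0 < K₂ ∧ 0 < Real.sqrt (α^2 - 4 * ε * K₁ * α) ∧
      ∀ ξ : ℝ, Summable (fun j : ℕ => Psi (j + 1) ξ) ∧
        (∑' j : ℕ, Psi (j + 1) ξ) ≤ K₂ * Real.exp (-Real.sqrt (α^2 - 4 * ε * K₁ * α) * |ξ|) := by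
  have hd : 0 < α^2 - 4 * ε * K₁ * α := by nlinarith
  set ν := Real.sqrt (α^2 - 4 * ε * K₁ * α) with hνdef
  have hν : 0 < ν := Real.sqrt_pos.mpr hd
  have hν2 : ν^2 = α^2 - 4 * ε * K₁ * α := Real.sq_sqrt hd.le
  have hνα : ν < α := by
    have hB : (0:ℝ) < 4 * ε * K₁ * α := by positivity
    have h2 : ν^2 < α^2 := by linarith
    exact lt_of_pow_lt_pow_left₀ 2 hα.le h2
  set K₂ := 2 * ε * K₁ * α / ν with hK₂def
  have hK₂ : 0 < K₂ := by positivity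
  set S : ℝ → ℝ := fun ξ => K₂ * Real.exp (-ν * |ξ|) with hSdef
  have hSpos : ∀ ξ, 0 < S ξ := fun ξ => by rw [hSdef]; positivity
  have hm1 : Measurable (Psi 1) := by rw [h1]; fun_prop
  have hPsi1nonneg : ∀ x, 0 ≤ Psi 1 x := by rw [h1]; intro x; positivity
  have hker : ∀ ξ, Integrable (fun η : ℝ => Psi 1 (ξ - η) * S η) := by
    intro ξ
    refine ((integrable_kernel hα hν ξ).const_mul (2 * ε * K₁ * K₂)).congr
      (Filter.Eventually.of_forall fun η => ?_)
    rw [h1]; simp only [hSdef]; ring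
  have keyS : ∀ ξ, (∫ η : ℝ, Psi 1 (ξ - η) * S η) = S ξ - Psi 1 ξ := by
    intro ξ
    have hfun : (fun η : ℝ => Psi 1 (ξ - η) * S η)
        = fun η => (2 * ε * K₁ * K₂) * (Real.exp (-α * |ξ - η|) * Real.exp (-ν * |η|)) := by
      funext η; rw [h1]; simp only [hSdef]; ring
    have hανν : α^2 - ν^2 = 4 * ε * K₁ * α := by rw [hν2]; ring
    rw [hfun, MeasureTheory.integral_const_mul, conv_exp hν hνα ξ, hανν, h1]
    simp only [hSdef, hK₂def]
    have h4 : (4 : ℝ) * ε * K₁ * α ≠ 0 := by positivity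
    field_simp
    ring
  have lemA : ∀ j : ℕ, Measurable (Psi (j+1)) ∧ ∀ ξ, 0 ≤ Psi (j+1) ξ ∧ Psi (j+1) ξ ≤ S ξ := by
    intro j
    induction j with
    | zero =>
      refine ⟨hm1, fun ξ => ⟨hPsi1nonneg ξ, ?_⟩⟩
      rw [h1]
      simp only [hSdef, hK₂def]
      have he : Real.exp (-α * |ξ|) ≤ Real.exp (-ν * |ξ|) :=
        Real.exp_le_exp.mpr (by nlinarith [abs_nonneg ξ])
      have hc : 2 * ε * K₁ ≤ 2 * ε * K₁ * α / ν := by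
        rw [le_div_iff₀ hν]
        have h2 : (0:ℝ) < 2 * ε * K₁ := by positivity
        nlinarith
      exact mul_le_mul hc he (Real.exp_pos _).le (by positivity)
    | succ j ih =>
      obtain ⟨ihm, ihb⟩ := ih
      have hrw : Psi (j+2) = fun ξ => ∫ η : ℝ, Psi 1 (ξ - η) * Psi (j+1) η := by
        have h := hrec (j+2) (by omega)
        simpa using h
      refine ⟨?_, fun ξ => ⟨?_, ?_⟩⟩
      · rw [hrw]
        have hsm : StronglyMeasurable (fun p : ℝ × ℝ => Psi 1 (p.1 - p.2) * Psi (j+1) p.2) :=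
          ((hm1.comp (measurable_fst.sub measurable_snd)).mul
            (ihm.comp measurable_snd)).stronglyMeasurable
        exact hsm.integral_prod_right'.measurable
      · rw [hrw]
        exact integral_nonneg fun η => mul_nonneg (hPsi1nonneg _) ((ihb η).1)
      · rw [hrw]
        have hmono := integral_mono_of_nonneg
          (Filter.Eventually.of_forall fun η => mul_nonneg (hPsi1nonneg _) ((ihb η).1))
          (hker ξ)
          (Filter.Eventually.of_forall fun η =>
            mul_le_mul_of_nonneg_left ((ihb η).2) (hPsi1nonneg _))
        calc (∫ η : ℝ, Psi 1 (ξ - η) * Psi (j+1) η) ≤ ∫ η : ℝ, Psi 1 (ξ - η) * S η := hmono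
          _ = S ξ - Psi 1 ξ := keyS ξ
          _ ≤ S ξ := by linarith [hPsi1nonneg ξ]
  have hintg : ∀ (k : ℕ) (ξ : ℝ), Integrable (fun η : ℝ => Psi 1 (ξ - η) * Psi (k+1) η) := by
    intro k ξ
    refine (hker ξ).mono' ?_ (Filter.Eventually.of_forall fun η => ?_)
    · exact ((hm1.comp (measurable_const.sub measurable_id)).mul
        (lemA k).1).aestronglyMeasurable
    · rw [Real.norm_eq_abs,
        abs_of_nonneg (mul_nonneg (hPsi1nonneg _) (((lemA k).2 η).1))]
      exact mul_le_mul_of_nonneg_left (((lemA k).2 η).2) (hPsi1nonneg _)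
  have lemB : ∀ n : ℕ, ∀ ξ, (∑ i ∈ Finset.range n, Psi (i+1) ξ) ≤ S ξ := by
    intro n
    induction n with
    | zero => intro ξ; simpa using (hSpos ξ).le
    | succ n ih =>
      intro ξ
      rw [Finset.sum_range_succ']
      have heq : ∀ i : ℕ, Psi (i+1+1) ξ = ∫ η : ℝ, Psi 1 (ξ - η) * Psi (i+1) η := by
        intro i
        have h := hrec (i+2) (by omega)
        have h' : Psi (i+2) = fun ξ => ∫ η : ℝ, Psi 1 (ξ - η) * Psi (i+1) η := by
          simpa using h
        rw [show i+1+1 = i+2 by omega, h']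
      have hsum : (∑ i ∈ Finset.range n, Psi (i+1+1) ξ)
          = ∫ η : ℝ, Psi 1 (ξ - η) * (∑ i ∈ Finset.range n, Psi (i+1) η) := by
        calc (∑ i ∈ Finset.range n, Psi (i+1+1) ξ)
            = ∑ i ∈ Finset.range n, ∫ η : ℝ, Psi 1 (ξ - η) * Psi (i+1) η :=
              Finset.sum_congr rfl fun i _ => heq i
          _ = ∫ η : ℝ, ∑ i ∈ Finset.range n, Psi 1 (ξ - η) * Psi (i+1) η :=
              (integral_finset_sum _ fun i _ => hintg i ξ).symm
          _ = _ := by simp_rw [← Finset.mul_sum]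
      have hb : (∫ η : ℝ, Psi 1 (ξ - η) * (∑ i ∈ Finset.range n, Psi (i+1) η))
          ≤ ∫ η : ℝ, Psi 1 (ξ - η) * S η :=
        integral_mono_of_nonneg
          (Filter.Eventually.of_forall fun η => mul_nonneg (hPsi1nonneg _)
            (Finset.sum_nonneg fun i _ => (((lemA i).2 η).1)))
          (hker ξ)
          (Filter.Eventually.of_forall fun η =>
            mul_le_mul_of_nonneg_left (ih η) (hPsi1nonneg _))
      have hkS := keyS ξ
      rw [hsum]
      have := hPsi1nonneg ξ
      simp only [Nat.zero_add] at *
      linarith [hb]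
  refine ⟨K₂, hK₂, hν, fun ξ => ?_⟩
  have hsummable : Summable (fun j : ℕ => Psi (j + 1) ξ) :=
    summable_of_sum_range_le (fun n => (((lemA n).2 ξ).1)) (fun n => lemB n ξ)
  refine ⟨hsummable, ?_⟩
  have htsum := Real.tsum_le_of_sum_range_le (fun n => (((lemA n).2 ξ).1)) (fun n => lemB n ξ)
  calc (∑' j : ℕ, Psi (j + 1) ξ) ≤ S ξ := htsum
    _ = K₂ * Real.exp (-ν * |ξ|) := by rw [hSdef]
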